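/- For 2 < p < ∞, the curvature function c_p(θ) = ((p-1)/p) (1/2)^{2(1-2/p)} (sin 2θ)^{2(1-2/p)} / [(cos θ)^{4/p̃} + (sin θ)^{4/p̃}]^{3/2} (with 1/p + 1/p̃ = 1) is strictly increasing for θ ∈ (0, π/4). -/

import Mathlib

open Real Filter Topology

/-- Curvature of the α-geometry on `P¹₂`, parametrized by `ρ = (cos²θ, sin²θ)`. -/
noncomputable def cCurv (p pt θ : ℝ) : ℝ :=
  ((p - 1) / p) * (1 / 2 : ℝ) ^ (2 * (1 - 2 / p)) *
    (Real.sin (2 * θ)) ^ (2 * (1 - 2 / p)) /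
      ((Real.cos θ) ^ (4 / pt) + (Real.sin θ) ^ (4 / pt)) ^ ((3 : ℝ) / 2)

lemma g_hasDerivAt (b θ : ℝ) (hc : Real.cos θ ≠ 0) (hs : Real.sin θ ≠ 0) :
    HasDerivAt (fun t => Real.cos t ^ b + Real.sin t ^ b)
      (b * Real.cos θ ^ (b - 1) * (-Real.sin θ) + b * Real.sin θ ^ (b - 1) * Real.cos θ) θ := by
  have h1 : HasDerivAt (fun t => Real.cos t ^ b) (b * Real.cos θ ^ (b - 1) * (-Real.sin θ)) θ := by
    have := (Real.hasDerivAt_rpow_const (p := b) (Or.inl hc)).comp θ (Real.hasDerivAt_cos θ)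
    simpa [mul_assoc, Function.comp_def] using this
  have h2 : HasDerivAt (fun t => Real.sin t ^ b) (b * Real.sin θ ^ (b - 1) * Real.cos θ) θ := by
    have := (Real.hasDerivAt_rpow_const (p := b) (Or.inl hs)).comp θ (Real.hasDerivAt_sin θ)
    simpa [mul_assoc, Function.comp_def] using this
  exact h1.add h2

lemma g_strictAntiOn (b : ℝ) (hb : 2 < b) :
    StrictAntiOn (fun θ => Real.cos θ ^ b + Real.sin θ ^ b) (Set.Ioo 0 (π / 4)) := by
  have hpi := Real.pi_pos
  have key : ∀ θ ∈ Set.Ioo (0:ℝ) (π / 4),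
      0 < Real.sin θ ∧ Real.sin θ < Real.cos θ := by
    intro θ hθ
    obtain ⟨h0, h4⟩ := hθ
    have hsin : 0 < Real.sin θ := Real.sin_pos_of_pos_of_lt_pi h0 (by linarith)
    have hlt : Real.sin θ < Real.sin (π / 2 - θ) := by
      apply Real.strictMonoOn_sin ⟨by linarith, by linarith⟩ ⟨by linarith, by linarith⟩
      linarith
    rw [Real.sin_pi_div_two_sub] at hlt
    exact ⟨hsin, hlt⟩
  apply strictAntiOn_of_deriv_neg (convex_Ioo _ _)
  · intro θ hθ
    obtain ⟨hs, hsc⟩ := key θ hθ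
    exact (g_hasDerivAt b θ (ne_of_gt (lt_trans hs hsc)) (ne_of_gt hs)).continuousAt.continuousWithinAt
  · rw [interior_Ioo]
    intro θ hθ
    obtain ⟨hs, hsc⟩ := key θ hθ
    have hcpos : 0 < Real.cos θ := lt_trans hs hsc
    rw [(g_hasDerivAt b θ (ne_of_gt hcpos) (ne_of_gt hs)).deriv]
    have hb0 : 0 < b := by linarith
    have hpow : Real.sin θ ^ (b - 2) < Real.cos θ ^ (b - 2) :=
      Real.rpow_lt_rpow hs.le hsc (by linarith)
    have hs1 : Real.sin θ ^ (b - 1) = Real.sin θ ^ (b - 2) * Real.sin θ := by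
      rw [show b - 1 = (b - 2) + 1 by ring, Real.rpow_add hs, Real.rpow_one]
    have hc1 : Real.cos θ ^ (b - 1) = Real.cos θ ^ (b - 2) * Real.cos θ := by
      rw [show b - 1 = (b - 2) + 1 by ring, Real.rpow_add hcpos, Real.rpow_one]
    rw [hs1, hc1]
    have hkey : b * Real.sin θ * Real.cos θ * Real.sin θ ^ (b - 2) <
        b * Real.sin θ * Real.cos θ * Real.cos θ ^ (b - 2) :=
      mul_lt_mul_of_pos_left hpow (mul_pos (mul_pos hb0 hs) hcpos)
    nlinarith [hkey]

/-- For `2 < p < ∞` the curvature `c_p` is strictly increasing on `(0, π/4)`. -/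
theorem cCurv_strictMonoOn (p pt : ℝ) (hp : 2 < p) (hpt : 1 / p + 1 / pt = 1) :
    StrictMonoOn (cCurv p pt) (Set.Ioo 0 (π / 4)) := by
  have hpi := Real.pi_pos
  have hp0 : (0:ℝ) < p := by linarith
  have ha : 0 < 2 * (1 - 2 / p) := by
    have : 2 / p < 1 := (div_lt_one hp0).2 (by linarith)
    linarith
  have hb : 4 / pt = 4 - 4 / p := by
    have h1 : 1 / pt = 1 - 1 / p := by linarith
    calc 4 / pt = 4 * (1 / pt) := by ring
      _ = 4 * (1 - 1 / p) := by rw [h1]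
      _ = 4 - 4 / p := by ring
  have hb2 : 2 < 4 / pt := by
    rw [hb]
    have : 4 / p < 2 := by
      rw [div_lt_iff₀ hp0]; linarith
    linarith
  have hC : 0 < (p - 1) / p * (1 / 2 : ℝ) ^ (2 * (1 - 2 / p)) := by
    apply mul_pos (div_pos (by linarith) hp0)
    exact Real.rpow_pos_of_pos (by norm_num) _
  intro x hx y hy hxy
  obtain ⟨hx0, hx4⟩ := hx
  obtain ⟨hy0, hy4⟩ := hy
  -- numerator facts
  have hsinx : 0 < Real.sin (2 * x) := Real.sin_pos_of_pos_of_lt_pi (by linarith) (by linarith)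
  have hsiny : 0 < Real.sin (2 * y) := Real.sin_pos_of_pos_of_lt_pi (by linarith) (by linarith)
  have hsinlt : Real.sin (2 * x) < Real.sin (2 * y) := by
    apply Real.strictMonoOn_sin ⟨by linarith, by linarith⟩ ⟨by linarith, by linarith⟩
    linarith
  have hN : Real.sin (2 * x) ^ (2 * (1 - 2 / p)) < Real.sin (2 * y) ^ (2 * (1 - 2 / p)) :=
    Real.rpow_lt_rpow hsinx.le hsinlt ha
  have hNxpos : 0 < Real.sin (2 * x) ^ (2 * (1 - 2 / p)) := Real.rpow_pos_of_pos hsinx _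
  have hNypos : 0 < Real.sin (2 * y) ^ (2 * (1 - 2 / p)) := Real.rpow_pos_of_pos hsiny _
  -- denominator facts
  have hg := g_strictAntiOn (4 / pt) hb2 ⟨hx0, hx4⟩ ⟨hy0, hy4⟩ hxy
  simp only at hg
  have hgypos : 0 < Real.cos y ^ (4 / pt) + Real.sin y ^ (4 / pt) := by
    have hcy : 0 < Real.cos y := Real.cos_pos_of_mem_Ioo ⟨by linarith, by linarith⟩
    have hsy : 0 < Real.sin y := Real.sin_pos_of_pos_of_lt_pi hy0 (by linarith)
    exact add_pos (Real.rpow_pos_of_pos hcy _) (Real.rpow_pos_of_pos hsy _)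
  have hD : (Real.cos y ^ (4 / pt) + Real.sin y ^ (4 / pt)) ^ ((3:ℝ)/2) <
      (Real.cos x ^ (4 / pt) + Real.sin x ^ (4 / pt)) ^ ((3:ℝ)/2) :=
    Real.rpow_lt_rpow hgypos.le hg (by norm_num)
  have hDypos : 0 < (Real.cos y ^ (4 / pt) + Real.sin y ^ (4 / pt)) ^ ((3:ℝ)/2) :=
    Real.rpow_pos_of_pos hgypos _
  have hDxpos : 0 < (Real.cos x ^ (4 / pt) + Real.sin x ^ (4 / pt)) ^ ((3:ℝ)/2) :=
    lt_trans hDypos hD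
  unfold cCurv
  calc ((p - 1) / p) * (1/2:ℝ) ^ (2 * (1 - 2 / p)) * Real.sin (2 * x) ^ (2 * (1 - 2 / p)) /
        (Real.cos x ^ (4 / pt) + Real.sin x ^ (4 / pt)) ^ ((3:ℝ)/2)
      < ((p - 1) / p) * (1/2:ℝ) ^ (2 * (1 - 2 / p)) * Real.sin (2 * y) ^ (2 * (1 - 2 / p)) /
        (Real.cos x ^ (4 / pt) + Real.sin x ^ (4 / pt)) ^ ((3:ℝ)/2) := by
        exact (div_lt_div_iff_of_pos_right hDxpos).2 (mul_lt_mul_of_pos_left hN hC)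
    _ < ((p - 1) / p) * (1/2:ℝ) ^ (2 * (1 - 2 / p)) * Real.sin (2 * y) ^ (2 * (1 - 2 / p)) /
        (Real.cos y ^ (4 / pt) + Real.sin y ^ (4 / pt)) ^ ((3:ℝ)/2) :=
        div_lt_div_of_pos_left (mul_pos hC hNypos) hDypos hD
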